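/- Let (X, ρ) be a weighted space. For every f ∈ 𝓑^ρ(X) with sup_{x∈X} f(x) > 0 there exists z ∈ X such that ρ(x)^{-1} f(x) ≤ ρ(z)^{-1} f(z) for all x ∈ X, i.e. the function ρ^{-1} f attains its supremum on X. -/

import Mathlib

open scoped ENNReal NNReal
open Filter Set MeasureTheory TopologicalSpace

noncomputable section

/-- An admissible weight function on a topological space: strictly positive with compact
and separable sublevel sets. -/
structure AdmissibleWeight {X : Type*} [TopologicalSpace X] (ρ : X → ℝ) : Prop where
  pos : ∀ x, 0 < ρ x
  isCompact_sublevel : ∀ R : ℝ, 0 < R → IsCompact {x | ρ x ≤ R}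
  isSeparable_sublevel : ∀ R : ℝ, 0 < R → TopologicalSpace.IsSeparable {x | ρ x ≤ R}

/-- The Banach space of bounded real-valued functions on `X`, with the sup norm. -/
abbrev BddFun (X : Type*) := lp (fun _ : X => ℝ) ∞

/-- Bounded continuous functions, divided by the weight `ρ`.  Under the isometric
identification `f ↦ f / ρ` of `B^ρ(X)` with bounded functions, this is the image of
`C_b(X)`. -/
def preCalB {X : Type*} [TopologicalSpace X] (ρ : X → ℝ) : Submodule ℝ (BddFun X) where
  carrier := {g | ∃ f : X → ℝ, Continuous f ∧ (∃ C, ∀ x, |f x| ≤ C) ∧ ∀ x, g x = f x / ρ x}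
  add_mem' := by
    rintro g₁ g₂ ⟨f₁, hc₁, ⟨C₁, hb₁⟩, h₁⟩ ⟨f₂, hc₂, ⟨C₂, hb₂⟩, h₂⟩
    refine ⟨f₁ + f₂, hc₁.add hc₂, ⟨C₁ + C₂, fun x => ?_⟩, fun x => ?_⟩
    · calc |(f₁ + f₂) x| ≤ |f₁ x| + |f₂ x| := abs_add_le _ _
        _ ≤ C₁ + C₂ := add_le_add (hb₁ x) (hb₂ x)
    · have : (g₁ + g₂ : BddFun X) x = g₁ x + g₂ x := by
        rw [lp.coeFn_add]; rfl
      rw [this, h₁ x, h₂ x]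
      simp [Pi.add_apply, add_div]
  zero_mem' := ⟨0, continuous_const, ⟨0, by simp⟩, fun x => by simp⟩
  smul_mem' := by
    rintro c g ⟨f, hc, ⟨C, hb⟩, h⟩
    refine ⟨fun x => c * f x, continuous_const.mul hc, ⟨|c| * C, fun x => ?_⟩, fun x => ?_⟩
    · rw [abs_mul]
      exact mul_le_mul_of_nonneg_left (hb x) (abs_nonneg c)
    · have : (c • g : BddFun X) x = c * g x := by
        rw [lp.coeFn_smul]; rfl
      rw [this, h x, mul_div_assoc]

/-- `𝓑^ρ(X)`: the closure of (the image of) the bounded continuous functions in `B^ρ(X)`,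
realized under the isometric identification `f ↦ f / ρ` as a closed subspace of the bounded
functions on `X`. -/
def calB {X : Type*} [TopologicalSpace X] (ρ : X → ℝ) : Submodule ℝ (BddFun X) :=
  (preCalB ρ).topologicalClosure

variable {X : Type*} [TopologicalSpace X] {ρ : X → ℝ}

/-- The value at `x` of (the `f/ρ` representation of) an element of `𝓑^ρ(X)`;
this equals `ρ(x)⁻¹ f(x)`. -/
def scaledApp (f : calB ρ) (x : X) : ℝ := (f : BddFun X) x

/-- The true value `f(x)` of an element of `𝓑^ρ(X)`. -/
def valOf (f : calB ρ) (x : X) : ℝ := ρ x * scaledApp f x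

/-- A function `F : X → ℝ` belongs to `𝓑^ρ(X)`. -/
def MemCalB {X : Type*} [TopologicalSpace X] (ρ : X → ℝ) (F : X → ℝ) : Prop :=
  ∃ g : BddFun X, g ∈ calB ρ ∧ ∀ x, g x = F x / ρ x

/-- A generalized Feller semigroup on `𝓑^ρ(X)`. -/
structure IsGenFellerSemigroup {X : Type*} [TopologicalSpace X] (ρ : X → ℝ)
    (P : ℝ≥0 → ((calB ρ) →L[ℝ] (calB ρ))) : Prop where
  map_zero : P 0 = ContinuousLinearMap.id ℝ (calB ρ)
  semigroup : ∀ s t : ℝ≥0, P (s + t) = (P s).comp (P t)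
  tendsto_apply : ∀ (f : calB ρ) (x : X),
    Tendsto (fun t : ℝ≥0 => valOf (P t f) x) (nhds 0) (nhds (valOf f x))
  norm_bound : ∃ (C : ℝ) (ε : ℝ≥0), 0 < ε ∧ ∀ t ≤ ε, ‖P t‖ ≤ C
  pos : ∀ (t : ℝ≥0) (f : calB ρ), (∀ x, 0 ≤ valOf f x) → ∀ x, 0 ≤ valOf (P t f) x


universe u

/-- For `f ∈ 𝓑^ρ(X)` with positive supremum, the function `ρ⁻¹ f` attains its supremum. -/
theorem calB_weighted_sup_attained
    {X : Type u} [TopologicalSpace X] [T2Space X] [CompletelyRegularSpace X]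
    {ρ : X → ℝ} (hρ : AdmissibleWeight ρ) (f : calB ρ)
    (hf : ∃ x, 0 < valOf f x) :
    ∃ z, ∀ x, scaledApp f x ≤ scaledApp f z := by
  classical
  obtain ⟨x₀, hx₀⟩ := hf
  have : Nonempty X := ⟨x₀⟩
  set g : BddFun X := (f : BddFun X) with hgdef
  have hρpos := hρ.pos
  have hg0 : 0 < g x₀ := by
    have h1 : 0 < ρ x₀ * g x₀ := hx₀
    nlinarith [hρpos x₀]
  have hbdd : BddAbove (Set.range fun x => g x) := by
    refine ⟨‖g‖, ?_⟩
    rintro _ ⟨x, rfl⟩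
    have := lp.norm_apply_le_norm ENNReal.top_ne_zero g x
    rw [Real.norm_eq_abs] at this
    exact (abs_le.mp this).2
  set s : ℝ := ⨆ x, g x with hs
  have hsx : ∀ x, g x ≤ s := fun x => le_ciSup hbdd x
  have hs_pos : 0 < s := lt_of_lt_of_le hg0 (hsx x₀)
  set ε : ℕ → ℝ := fun n => min (1 / (n + 1)) (s / 4) with hε
  have hεpos : ∀ n, 0 < ε n := fun n =>
    lt_min (by positivity) (by positivity)
  have hεanti : ∀ k n : ℕ, k ≤ n → ε n ≤ ε k := by
    intro k n hkn
    apply min_le_min _ le_rfl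
    apply one_div_le_one_div_of_le (by positivity)
    have : (k : ℝ) ≤ n := Nat.cast_le.mpr hkn
    linarith
  have hεle1 : ∀ n : ℕ, ε n ≤ 1 / (n + 1) := fun n => min_le_left _ _
  have hεles : ∀ n, ε n ≤ s / 4 := fun n => min_le_right _ _
  -- membership in the closure of `preCalB ρ`
  have hclos : g ∈ closure ((preCalB ρ : Set (BddFun X))) := by
    have h2 := f.2
    rw [calB, ← Submodule.topologicalClosure_coe] at *
    exact h2
  -- approximating continuous functions
  have happrox : ∀ n : ℕ, ∃ (fn : X → ℝ) (C : ℝ), Continuous fn ∧ (∀ x, |fn x| ≤ C) ∧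
      ∀ x, |g x - fn x / ρ x| ≤ ε n := by
    intro n
    obtain ⟨h, hmem, hdist⟩ := Metric.mem_closure_iff.mp hclos (ε n) (hεpos n)
    obtain ⟨fn, hcont, ⟨C, hC⟩, hfx⟩ := hmem
    refine ⟨fn, C, hcont, hC, fun x => ?_⟩
    have h1 : |g x - h x| ≤ dist g h := by
      rw [dist_eq_norm]
      have h2 := lp.norm_apply_le_norm ENNReal.top_ne_zero (g - h) x
      have h3 : (g - h : BddFun X) x = g x - h x := by
        rw [lp.coeFn_sub]; rfl
      rwa [h3, Real.norm_eq_abs] at h2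
    rw [← hfx x]
    exact h1.trans hdist.le
  choose F C hFc hFb hFap using happrox
  -- lower semicontinuity of ρ
  have hρlsc : ∀ y : ℝ, IsClosed {x | ρ x ≤ y} := by
    intro y
    rcases le_or_gt y 0 with hy | hy
    · have : {x | ρ x ≤ y} = (∅ : Set X) := by
        ext x
        simp only [Set.mem_setOf_eq, Set.mem_empty_iff_false, iff_false, not_le]
        exact lt_of_le_of_lt hy (hρpos x)
      rw [this]; exact isClosed_empty
    · exact (hρ.isCompact_sublevel y hy).isClosed
  have hρlsc' : LowerSemicontinuous ρ := by
    rw [lowerSemicontinuous_iff_isClosed_preimage]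
    intro y; exact hρlsc y
  have hcρ : ∀ c : ℝ, 0 < c → LowerSemicontinuous (fun x => c * ρ x) := by
    intro c hc
    rw [lowerSemicontinuous_iff_isClosed_preimage]
    intro y
    have heq : (fun x => c * ρ x) ⁻¹' Set.Iic y = {x | ρ x ≤ y / c} := by
      ext x
      simp only [Set.mem_preimage, Set.mem_Iic, Set.mem_setOf_eq, le_div_iff₀ hc, mul_comm]
    rw [heq]
    exact hρlsc _
  -- the closed sets
  set L : ℕ → Set X := fun n => {x | (s - 2 * ε n) * ρ x ≤ F n x} with hL
  have hcpos : ∀ n, 0 < s - 2 * ε n := by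
    intro n
    have := hεles n
    linarith
  have hLclosed : ∀ n, IsClosed (L n) := by
    intro n
    have hlsc : LowerSemicontinuous (fun x => (s - 2 * ε n) * ρ x + (-(F n x))) :=
      (hcρ _ (hcpos n)).add ((hFc n).neg.lowerSemicontinuous)
    have heq : L n = (fun x => (s - 2 * ε n) * ρ x + (-(F n x))) ⁻¹' Set.Iic 0 := by
      ext x
      simp only [hL, Set.mem_setOf_eq, Set.mem_preimage, Set.mem_Iic]
      constructor <;> intro h <;> linarith
    rw [heq]
    exact lowerSemicontinuous_iff_isClosed_preimage.mp hlsc 0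
  have hLcompact : ∀ n, IsCompact (L n) := by
    intro n
    have hCpos : (0:ℝ) < max (C n) 1 := lt_of_lt_of_le one_pos (le_max_right _ _)
    have hRpos : (0:ℝ) < max (C n) 1 / (s / 2) := by positivity
    refine (hρ.isCompact_sublevel _ hRpos).of_isClosed_subset (hLclosed n) ?_
    intro x hx
    have hx' : (s - 2 * ε n) * ρ x ≤ F n x := hx
    have h1 : s / 2 * ρ x ≤ (s - 2 * ε n) * ρ x := by
      have h2 := hεles n
      have := hρpos x
      nlinarith
    have h3 : F n x ≤ max (C n) 1 := le_trans (le_trans (le_abs_self _) (hFb n x)) (le_max_left _ _)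
    show ρ x ≤ max (C n) 1 / (s / 2)
    rw [le_div_iff₀ (by positivity)]
    nlinarith
  -- nested intersections
  set M : ℕ → Set X := fun n => ⋂ k ∈ Set.Iic n, L k with hM
  have hMsub : ∀ k n, k ≤ n → M n ⊆ L k := by
    intro k n hkn x hx
    simp only [hM, Set.mem_iInter, Set.mem_Iic] at hx
    exact hx k hkn
  have hManti : ∀ n, M (n + 1) ⊆ M n := by
    intro n x hx
    simp only [hM, Set.mem_iInter, Set.mem_Iic] at hx ⊢
    exact fun k hk => hx k (hk.trans (Nat.le_succ n))
  have hMclosed : ∀ n, IsClosed (M n) :=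
    fun n => isClosed_biInter fun k _ => hLclosed k
  have hMne : ∀ n, (M n).Nonempty := by
    intro n
    have hlt : s - ε n < s := by linarith [hεpos n]
    obtain ⟨x, hx⟩ := exists_lt_of_lt_ciSup (hs ▸ hlt)
    refine ⟨x, ?_⟩
    simp only [hM, Set.mem_iInter, Set.mem_Iic]
    intro k hk
    have hap := hFap k x
    have h1 : g x - ε k ≤ F k x / ρ x := by
      have := (abs_le.mp hap).2
      linarith
    have h2 : s - 2 * ε k ≤ F k x / ρ x := by
      have := hεanti k n hk
      linarith
    show (s - 2 * ε k) * ρ x ≤ F k x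
    rw [← le_div_iff₀ (hρpos x)] at *
    exact h2
  have hM0 : IsCompact (M 0) :=
    (hLcompact 0).of_isClosed_subset (hMclosed 0) (hMsub 0 0 le_rfl)
  obtain ⟨z, hz⟩ := IsCompact.nonempty_iInter_of_sequence_nonempty_isCompact_isClosed
    M hManti hMne hM0 hMclosed
  have hzL : ∀ n, (s - 2 * ε n) * ρ z ≤ F n z := by
    intro n
    have : z ∈ M n := Set.mem_iInter.mp hz n
    exact hMsub n n le_rfl this
  have hgz : ∀ n, s - 3 * ε n ≤ g z := by
    intro n
    have h1 : s - 2 * ε n ≤ F n z / ρ z := (le_div_iff₀ (hρpos z)).mpr (hzL n)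
    have h2 := (abs_le.mp (hFap n z)).1
    linarith
  have hgzs : s ≤ g z := by
    refine le_of_forall_pos_le_add ?_
    intro δ hδ
    obtain ⟨n, hn⟩ := exists_nat_one_div_lt (show (0:ℝ) < δ / 3 by positivity)
    have h1 : ε n ≤ 1 / (n + 1) := hεle1 n
    have h2 := hgz n
    have : (1 : ℝ) / (n + 1) < δ / 3 := hn
    linarith
  exact ⟨z, fun x => (hsx x).trans hgzs⟩

end
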